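/- Let k ≥ 2 and m ≥ 2 be integers and set n := 3(k−1) + 2m. Let G be the n-vertex graph consisting of k−1 pairwise vertex-disjoint triangles, a complete bipartite graph K_{m,m} with parts A and B vertex-disjoint from all the triangles, together with an edge from every vertex of a triangle to every vertex of A. Then δ(G) = m, G contains a 2-factor consisting of exactly k cycles, and G contains no 2-factor consisting of fewer than k cycles. -/

import Mathlib

/-- `H` is a 2-factor of `G`: a spanning 2-regular subgraph of `G`
(viewed as a graph on the same vertex set). -/
def IsTwoFactor {V : Type*} (G H : SimpleGraph V) : Prop :=
  H ≤ G ∧ ∀ v : V, (H.neighborSet v).ncard = 2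

/-- The number of cycles of a 2-factor, i.e. its number of connected components. -/
noncomputable def numCycles {V : Type*} (H : SimpleGraph V) : ℕ :=
  Nat.card H.ConnectedComponent

/-- The vertex set of the example graph: `k-1` triangles, together with the two sides
`A` (= left) and `B` (= right) of a complete bipartite graph `K_{m,m}`. -/
abbrev ExVertex (k m : ℕ) : Type := (Fin (k - 1) × Fin 3) ⊕ (Fin m ⊕ Fin m)

/-- The base relation of the example graph: edges within each triangle, all edges of
`K_{m,m}` between `A` and `B`, and all edges between triangle vertices and `A`. -/
def exRel (k m : ℕ) : ExVertex k m → ExVertex k m → Prop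
  | Sum.inl (t, _), Sum.inl (t', _) => t = t'
  | Sum.inr (Sum.inl _), Sum.inr (Sum.inr _) => True
  | Sum.inl _, Sum.inr (Sum.inl _) => True
  | _, _ => False

/-- The example graph: `k-1` pairwise disjoint triangles, a `K_{m,m}` with parts `A` and
`B` disjoint from the triangles, plus all edges between triangle vertices and `A`. -/
def exGraph (k m : ℕ) : SimpleGraph (ExVertex k m) :=
  SimpleGraph.fromRel (exRel k m)

/-! ### Auxiliary material -/

open Sum SimpleGraph

section Aux

variable {k m : ℕ}

@[simp] lemma exRel_LL (t i t' j) : exRel k m (inl (t,i)) (inl (t',j)) = (t = t') := rfl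
@[simp] lemma exRel_LA (t i a) : exRel k m (inl (t,i)) (inr (inl a)) = True := rfl
@[simp] lemma exRel_LB (t i b) : exRel k m (inl (t,i)) (inr (inr b)) = False := rfl
@[simp] lemma exRel_AL (a t j) : exRel k m (inr (inl a)) (inl (t,j)) = False := rfl
@[simp] lemma exRel_AA (a a') : exRel k m (inr (inl a)) (inr (inl a')) = False := rfl
@[simp] lemma exRel_AB (a b) : exRel k m (inr (inl a)) (inr (inr b)) = True := rfl
@[simp] lemma exRel_BL (b t j) : exRel k m (inr (inr b)) (inl (t,j)) = False := rfl
@[simp] lemma exRel_BA (b a) : exRel k m (inr (inr b)) (inr (inl a)) = False := rfl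
@[simp] lemma exRel_BB (b b') : exRel k m (inr (inr b)) (inr (inr b')) = False := rfl

/-- The 2-factor relation: triangles, plus a Hamilton cycle of `K_{m,m}`:
`a_i ~ b_i` and `a_{i+1} ~ b_i`. -/
def facRel (k m : ℕ) : ExVertex k m → ExVertex k m → Prop
  | Sum.inl (t, _), Sum.inl (t', _) => t = t'
  | Sum.inr (Sum.inl a), Sum.inr (Sum.inr b) => a = b ∨ a = finRotate m b
  | _, _ => False

def facGraph (k m : ℕ) : SimpleGraph (ExVertex k m) := SimpleGraph.fromRel (facRel k m)

@[simp] lemma facRel_LL (t i t' j) : facRel k m (inl (t,i)) (inl (t',j)) = (t = t') := rfl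
@[simp] lemma facRel_LA (t i a) : facRel k m (inl (t,i)) (inr (inl a)) = False := rfl
@[simp] lemma facRel_LB (t i b) : facRel k m (inl (t,i)) (inr (inr b)) = False := rfl
@[simp] lemma facRel_AL (a t j) : facRel k m (inr (inl a)) (inl (t,j)) = False := rfl
@[simp] lemma facRel_AA (a a') : facRel k m (inr (inl a)) (inr (inl a')) = False := rfl
@[simp] lemma facRel_AB (a b) :
    facRel k m (inr (inl a)) (inr (inr b)) = (a = b ∨ a = finRotate m b) := rfl
@[simp] lemma facRel_BL (b t j) : facRel k m (inr (inr b)) (inl (t,j)) = False := rfl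
@[simp] lemma facRel_BA (b a) : facRel k m (inr (inr b)) (inr (inl a)) = False := rfl
@[simp] lemma facRel_BB (b b') : facRel k m (inr (inr b)) (inr (inr b')) = False := rfl

/-- The component label. -/
def exLabel (k m : ℕ) : ExVertex k m → (Fin (k-1)) ⊕ Unit
  | Sum.inl (t, _) => Sum.inl t
  | Sum.inr _ => Sum.inr ()

@[simp] lemma exLabel_L (t i) : exLabel k m (inl (t,i)) = inl t := rfl
@[simp] lemma exLabel_R (x) : exLabel k m (inr x) = inr () := rfl

lemma label_const {V : Type*} {G : SimpleGraph V} {β : Sort*} {f : V → β}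
    (h : ∀ v w, G.Adj v w → f v = f w) : ∀ {v w : V}, G.Reachable v w → f v = f w := by
  intro v w r
  obtain ⟨p⟩ := r
  induction p with
  | nil => rfl
  | cons a _ ih => exact (h _ _ a).trans ih

lemma ncard_range_fin {α : Type*} (f : Fin m → α) (hf : Function.Injective f) :
    (Set.range f).ncard = m := by
  rw [← Set.image_univ, Set.ncard_image_of_injective _ hf, Set.ncard_univ,
    Nat.card_eq_fintype_card, Fintype.card_fin]

lemma finRotate_ne (hm : 2 ≤ m) (b : Fin m) : finRotate m b ≠ b := by
  obtain ⟨n, rfl⟩ : ∃ n, m = n + 1 := ⟨m - 1, by omega⟩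
  rw [finRotate_succ_apply]
  intro h
  have hv := congrArg Fin.val h
  rw [Fin.val_add_one] at hv
  split_ifs at hv with h'
  · subst h'
    simp [Fin.val_last] at hv
    omega
  · omega

/-- If the edges of `H` respect the label, then `H` has at least `k` components. -/
lemma card_ge (hk : 2 ≤ k) (hm : 2 ≤ m) (H : SimpleGraph (ExVertex k m))
    (hadj : ∀ v w, H.Adj v w → exLabel k m v = exLabel k m w) :
    k ≤ numCycles H := by
  let F : H.ConnectedComponent → (Fin (k-1)) ⊕ Unit :=
    SimpleGraph.ConnectedComponent.lift (exLabel k m)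
      (fun v w p _ => label_const hadj ⟨p⟩)
  have hsurj : Function.Surjective F := by
    rintro (t | ⟨⟩)
    · exact ⟨H.connectedComponentMk (inl (t, 0)), rfl⟩
    · exact ⟨H.connectedComponentMk (inr (inl ⟨0, by omega⟩)), rfl⟩
  have h1 := Nat.card_le_card_of_surjective F hsurj
  have h2 : Nat.card ((Fin (k-1)) ⊕ Unit) = k := by
    simp [Nat.card_eq_fintype_card]
    omega
  unfold numCycles
  omega

/-- If moreover equal labels imply reachability, `H` has exactly `k` components. -/
lemma card_eq (hk : 2 ≤ k) (hm : 2 ≤ m) (H : SimpleGraph (ExVertex k m))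
    (hadj : ∀ v w, H.Adj v w → exLabel k m v = exLabel k m w)
    (hconn : ∀ v w, exLabel k m v = exLabel k m w → H.Reachable v w) :
    numCycles H = k := by
  let F : H.ConnectedComponent → (Fin (k-1)) ⊕ Unit :=
    SimpleGraph.ConnectedComponent.lift (exLabel k m)
      (fun v w p _ => label_const hadj ⟨p⟩)
  have hsurj : Function.Surjective F := by
    rintro (t | ⟨⟩)
    · exact ⟨H.connectedComponentMk (inl (t, 0)), rfl⟩
    · exact ⟨H.connectedComponentMk (inr (inl ⟨0, by omega⟩)), rfl⟩
  have hinj : Function.Injective F := by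
    intro c d
    refine SimpleGraph.ConnectedComponent.ind₂ (fun v w h => ?_) c d
    exact SimpleGraph.ConnectedComponent.sound (hconn v w h)
  have h1 : Nat.card H.ConnectedComponent = Nat.card ((Fin (k-1)) ⊕ Unit) :=
    Nat.card_eq_of_bijective F ⟨hinj, hsurj⟩
  have h2 : Nat.card ((Fin (k-1)) ⊕ Unit) = k := by
    simp [Nat.card_eq_fintype_card]
    omega
  unfold numCycles
  omega

end Aux

theorem stmt16 (k m : ℕ) (hk : 2 ≤ k) (hm : 2 ≤ m) :
    -- δ(G) = m
    ((∀ x : ExVertex k m, m ≤ ((exGraph k m).neighborSet x).ncard) ∧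
      (∃ x : ExVertex k m, ((exGraph k m).neighborSet x).ncard = m)) ∧
    -- G has a 2-factor consisting of exactly k cycles
    (∃ H : SimpleGraph (ExVertex k m), IsTwoFactor (exGraph k m) H ∧ numCycles H = k) ∧
    -- G has no 2-factor consisting of fewer than k cycles
    ¬ ∃ H : SimpleGraph (ExVertex k m), IsTwoFactor (exGraph k m) H ∧ numCycles H < k := by
  classical
  have hm0 : 0 < m := by omega
  have hAinj : Function.Injective (fun a : Fin m => (inr (inl a) : ExVertex k m)) := by
    intro a b h; simpa using h
  have hBinj : Function.Injective (fun b : Fin m => (inr (inr b) : ExVertex k m)) := by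
    intro a b h; simpa using h
  refine ⟨⟨?_, ?_⟩, ?_, ?_⟩
  · -- min degree ≥ m
    intro x
    rcases x with ⟨t, i⟩ | a | b
    · have hsub : Set.range (fun a : Fin m => (inr (inl a) : ExVertex k m)) ⊆
          (exGraph k m).neighborSet (inl (t,i)) := by
        rintro _ ⟨a, rfl⟩
        simp [mem_neighborSet, exGraph, SimpleGraph.fromRel_adj]
      calc m = _ := (ncard_range_fin _ hAinj).symm
        _ ≤ _ := Set.ncard_le_ncard hsub (Set.toFinite _)
    · have hsub : Set.range (fun b : Fin m => (inr (inr b) : ExVertex k m)) ⊆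
          (exGraph k m).neighborSet (inr (inl a)) := by
        rintro _ ⟨b, rfl⟩
        simp [mem_neighborSet, exGraph, SimpleGraph.fromRel_adj]
      calc m = _ := (ncard_range_fin _ hBinj).symm
        _ ≤ _ := Set.ncard_le_ncard hsub (Set.toFinite _)
    · have hsub : Set.range (fun a : Fin m => (inr (inl a) : ExVertex k m)) ⊆
          (exGraph k m).neighborSet (inr (inr b)) := by
        rintro _ ⟨a, rfl⟩
        simp [mem_neighborSet, exGraph, SimpleGraph.fromRel_adj]
      calc m = _ := (ncard_range_fin _ hAinj).symm
        _ ≤ _ := Set.ncard_le_ncard hsub (Set.toFinite _)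
  · -- vertex of degree exactly m
    refine ⟨inr (inr ⟨0, hm0⟩), ?_⟩
    have hset : (exGraph k m).neighborSet (inr (inr ⟨0, hm0⟩)) =
        Set.range (fun a : Fin m => (inr (inl a) : ExVertex k m)) := by
      ext y
      rcases y with ⟨t, i⟩ | a | b <;>
        simp [mem_neighborSet, exGraph, SimpleGraph.fromRel_adj]
    rw [hset, ncard_range_fin _ hAinj]
  · -- the 2-factor with k cycles
    refine ⟨facGraph k m, ⟨?_, ?_⟩, ?_⟩
    · -- facGraph ≤ exGraph
      intro v w h
      simp only [facGraph, exGraph, SimpleGraph.fromRel_adj] at h ⊢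
      obtain ⟨hne, hr⟩ := h
      refine ⟨hne, ?_⟩
      rcases v with ⟨t, i⟩ | a | b <;> rcases w with ⟨t', j⟩ | a' | b' <;> simp_all
    · -- 2-regular
      intro v
      have h3 : ∀ i j : Fin 3, (¬ i = j) ↔ (j = i + 1 ∨ j = i + 2) := by decide
      have h32 : ∀ i : Fin 3, i + 1 ≠ i + 2 := by decide
      rcases v with ⟨t, i⟩ | a | b
      · have hset : (facGraph k m).neighborSet (inl (t,i)) =
            (fun j => (inl (t,j) : ExVertex k m)) '' {j : Fin 3 | ¬ i = j} := by
          ext y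
          rcases y with ⟨t', j⟩ | a | b <;>
            simp [mem_neighborSet, facGraph, SimpleGraph.fromRel_adj]
          constructor
          · rintro ⟨h1, h2⟩
            have ht : t = t' := h2.elim id Eq.symm
            exact ⟨h1 ht, ht⟩
          · rintro ⟨h1, h2⟩
            exact ⟨fun _ => h1, Or.inl h2⟩
        rw [hset, Set.ncard_image_of_injective _ (fun a b h => by simpa using h)]
        have hs : {j : Fin 3 | ¬ i = j} = {i + 1, i + 2} := by
          ext j; simpa using h3 i j
        rw [hs]
        exact Set.ncard_pair (h32 i)
      · have hset : (facGraph k m).neighborSet (inr (inl a)) =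
            {(inr (inr a) : ExVertex k m), inr (inr ((finRotate m).symm a))} := by
          ext y
          rcases y with ⟨t', j⟩ | a' | b <;>
            simp [mem_neighborSet, facGraph, SimpleGraph.fromRel_adj]
          constructor
          · rintro (rfl | h)
            · exact Or.inl rfl
            · exact Or.inr (by rw [h]; have := Equiv.symm_apply_apply (finRotate m) b; simp at this; exact this.symm)
          · rintro (rfl | rfl)
            · exact Or.inl rfl
            · exact Or.inr (by have := Equiv.apply_symm_apply (finRotate m) a; simp at this; exact this.symm)
        rw [hset]
        refine Set.ncard_pair ?_
        simp only [ne_eq, inr.injEq]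
        intro h
        exact finRotate_ne hm a (by conv_lhs => rw [h, Equiv.apply_symm_apply])
      · have hset : (facGraph k m).neighborSet (inr (inr b)) =
            {(inr (inl b) : ExVertex k m), inr (inl (finRotate m b))} := by
          ext y
          rcases y with ⟨t', j⟩ | a | b' <;>
            simp [mem_neighborSet, facGraph, SimpleGraph.fromRel_adj]
        rw [hset]
        refine Set.ncard_pair ?_
        simp only [ne_eq, inr.injEq, inl.injEq]
        exact fun h => finRotate_ne hm b h.symm
    · -- exactly k components
      refine card_eq hk hm _ ?_ ?_
      · intro v w h
        simp only [facGraph, SimpleGraph.fromRel_adj] at h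
        obtain ⟨hne, hr⟩ := h
        rcases v with ⟨t, i⟩ | a | b <;> rcases w with ⟨t', j⟩ | a' | b' <;> simp_all
        all_goals exact hr.elim id Eq.symm
      · -- equal labels → reachable
        obtain ⟨n, rfl⟩ : ∃ n, m = n + 1 := ⟨m - 1, by omega⟩
        have hab : ∀ a b : Fin (n+1), a = b ∨ a = finRotate (n+1) b →
            (facGraph k (n+1)).Adj (inr (inl a)) (inr (inr b)) := by
          intro a b h
          rw [facGraph, SimpleGraph.fromRel_adj]
          exact ⟨by simp, Or.inl (by simpa using h)⟩
        have hA : ∀ a : Fin (n+1),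
            (facGraph k (n+1)).Reachable (inr (inl 0)) (inr (inl a)) := by
          intro a
          induction a using Fin.induction with
          | zero => exact Reachable.refl _
          | succ i ih =>
            refine ih.trans ?_
            have h1 := hab i.castSucc i.castSucc (Or.inl rfl)
            have h2 := hab i.succ i.castSucc (Or.inr ?_)
            · exact h1.reachable.trans h2.symm.reachable
            · rw [finRotate_succ_apply, Fin.coeSucc_eq_succ]
        have hR : ∀ x : Fin (n+1) ⊕ Fin (n+1),
            (facGraph k (n+1)).Reachable (inr (inl 0)) (inr x) := by
          rintro (a | b)
          · exact hA a
          · exact (hA b).trans (hab b b (Or.inl rfl)).reachable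
        intro v w hl
        rcases v with ⟨t, i⟩ | x <;> rcases w with ⟨t', j⟩ | y
        · simp only [exLabel_L, inl.injEq] at hl
          subst hl
          by_cases hij : i = j
          · subst hij; exact Reachable.refl _
          · refine Adj.reachable ?_
            rw [facGraph, SimpleGraph.fromRel_adj]
            exact ⟨by simp [hij], Or.inl rfl⟩
        · simp at hl
        · simp at hl
        · exact (hR x).symm.trans (hR y)
  · -- no 2-factor with fewer than k cycles
    rintro ⟨H, ⟨hle, hdeg⟩, hlt⟩
    -- column sets have exactly 2 elements
    set colSet : Fin m → Set (Fin m) :=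
      fun b => {a : Fin m | H.Adj (inr (inl a)) (inr (inr b))} with hcolSet
    set rowSet : Fin m → Set (Fin m) :=
      fun a => {b : Fin m | H.Adj (inr (inl a)) (inr (inr b))} with hrowSet
    have hcol : ∀ b, (colSet b).ncard = 2 := by
      intro b
      have himg : H.neighborSet (inr (inr b)) =
          (fun a => (inr (inl a) : ExVertex k m)) '' colSet b := by
        ext y
        constructor
        · intro hy
          have hG := hle hy
          rcases y with ⟨t', j⟩ | a | b'
          · exfalso; revert hG; simp [exGraph, SimpleGraph.fromRel_adj]
          · exact ⟨a, hy.symm, rfl⟩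
          · exfalso; revert hG; simp [exGraph, SimpleGraph.fromRel_adj]
        · rintro ⟨a, ha, rfl⟩
          exact (Set.mem_setOf_eq ▸ ha).symm
      have := hdeg (inr (inr b))
      rw [himg, Set.ncard_image_of_injective _ hAinj] at this
      exact this
    have hrowsub : ∀ a, (fun b => (inr (inr b) : ExVertex k m)) '' rowSet a ⊆
        H.neighborSet (inr (inl a)) := by
      rintro a _ ⟨b, hb, rfl⟩
      exact hb
    have hrowle : ∀ a, (rowSet a).ncard ≤ 2 := by
      intro a
      have := Set.ncard_le_ncard (hrowsub a) (Set.toFinite _)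
      rwa [Set.ncard_image_of_injective _ hBinj, hdeg] at this
    -- Finset versions and double counting
    have hnc : ∀ (s : Set (Fin m)) [DecidablePred (· ∈ s)],
        s.ncard = (Finset.univ.filter (· ∈ s)).card := by
      intro s _
      rw [← Set.ncard_coe_finset]
      congr 1
      ext x
      simp
    have hsum : ∑ a : Fin m, (rowSet a).ncard = ∑ b : Fin m, (colSet b).ncard := by
      simp only [hnc, Finset.card_filter]
      rw [Finset.sum_comm]
      simp only [hrowSet, hcolSet, Set.mem_setOf_eq]
    have hrow : ∀ a, (rowSet a).ncard = 2 := by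
      have h2m : ∑ b : Fin m, (colSet b).ncard = ∑ _a : Fin m, 2 := by
        simp [hcol]
      rw [h2m] at hsum
      intro a
      exact (Finset.sum_eq_sum_iff_of_le (fun i _ => hrowle i)).1 hsum a (Finset.mem_univ a)
    -- hence A-vertices have all neighbors in B
    have hnoTA : ∀ (a : Fin m) (y : Fin (k-1) × Fin 3), ¬ H.Adj (inr (inl a)) (inl y) := by
      intro a y hadj
      have heq : (fun b => (inr (inr b) : ExVertex k m)) '' rowSet a =
          H.neighborSet (inr (inl a)) := by
        refine Set.eq_of_subset_of_ncard_le (hrowsub a) ?_ (Set.toFinite _)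
        rw [Set.ncard_image_of_injective _ hBinj, hdeg, hrow]
      have : (inl y : ExVertex k m) ∈ (fun b => (inr (inr b) : ExVertex k m)) '' rowSet a := by
        rw [heq]; exact hadj
      obtain ⟨b, -, hb⟩ := this
      exact absurd hb (by simp)
    -- labels are preserved by H-edges
    have hadj : ∀ v w, H.Adj v w → exLabel k m v = exLabel k m w := by
      intro v w h
      have hG := hle h
      rw [exGraph, SimpleGraph.fromRel_adj] at hG
      obtain ⟨-, hr⟩ := hG
      rcases v with ⟨t, i⟩ | a | b <;> rcases w with ⟨t', j⟩ | a' | b'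
      · simp only [exLabel_L, inl.injEq]
        exact hr.elim id Eq.symm
      · exact absurd h.symm (hnoTA a' (t, i))
      · simp_all
      · exact absurd h (hnoTA a (t', j))
      all_goals simp_all
    have := card_ge hk hm H hadj
    omega
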